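/- Let H be a ℂ-algebra, ψ an algebra automorphism of H, R ∈ H⊗H, B a ℂ-algebra with an algebra homomorphism δ : B → B⊗H, and K ∈ B⊗H. Set δ^ψ := (id_B⊗ψ)∘δ, R^ψ := (ψ⊗id)(R) and R^{ψψ} := (ψ⊗ψ)(R). Assume the universal K-matrix axioms (K1) K·δ(b) = δ^ψ(b)·K for all b ∈ B, and (K2) (δ⊗id_H)(K) = (R^ψ)₃₂·K₁₃·R₂₃ in B⊗H⊗H. Then K satisfies the ψ-twisted universal reflection equation K₁₂·(R^ψ)₃₂·K₁₃·R₂₃ = (R^{ψψ})₃₂·K₁₃·(R^ψ)₂₃·K₁₂ in B⊗H⊗H. -/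

import Mathlib

open scoped TensorProduct

noncomputable section

section ComodMaps
variable (B H : Type*) [Ring B] [Algebra ℂ B] [Ring H] [Algebra ℂ H]

/-- The insertion `K ↦ K₁₂` of `B⊗H` into `B⊗H⊗H`. -/
def K12m : (B ⊗[ℂ] H) →ₐ[ℂ] B ⊗[ℂ] (H ⊗[ℂ] H) :=
  Algebra.TensorProduct.map (AlgHom.id ℂ B) Algebra.TensorProduct.includeLeft

/-- The insertion `K ↦ K₁₃` of `B⊗H` into `B⊗H⊗H`. -/
def K13m : (B ⊗[ℂ] H) →ₐ[ℂ] B ⊗[ℂ] (H ⊗[ℂ] H) :=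
  Algebra.TensorProduct.map (AlgHom.id ℂ B) Algebra.TensorProduct.includeRight

/-- The insertion `X ↦ X₂₃` of `H⊗H` into `B⊗H⊗H`. -/
def i23 : (H ⊗[ℂ] H) →ₐ[ℂ] B ⊗[ℂ] (H ⊗[ℂ] H) := Algebra.TensorProduct.includeRight

/-- The insertion `X ↦ X₃₂` of `H⊗H` into `B⊗H⊗H`. -/
def i32 : (H ⊗[ℂ] H) →ₐ[ℂ] B ⊗[ℂ] (H ⊗[ℂ] H) :=
  (Algebra.TensorProduct.includeRight : (H ⊗[ℂ] H) →ₐ[ℂ] B ⊗[ℂ] (H ⊗[ℂ] H)).comp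
    (Algebra.TensorProduct.comm ℂ H H).toAlgHom

/-- `δ ⊗ id_H : B⊗H → B⊗(H⊗H)` for `δ : B → B⊗H`. -/
def delta1 (δ : B →ₐ[ℂ] B ⊗[ℂ] H) : (B ⊗[ℂ] H) →ₐ[ℂ] B ⊗[ℂ] (H ⊗[ℂ] H) :=
  (Algebra.TensorProduct.assoc ℂ ℂ ℂ B H H).toAlgHom.comp
    (Algebra.TensorProduct.map δ (AlgHom.id ℂ H))

/-- `δ^ψ = (id_B ⊗ ψ) ∘ δ`. -/
def dpsi (ψ : H ≃ₐ[ℂ] H) (δ : B →ₐ[ℂ] B ⊗[ℂ] H) : B →ₐ[ℂ] B ⊗[ℂ] H :=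
  (Algebra.TensorProduct.map (AlgHom.id ℂ B) ψ.toAlgHom).comp δ

end ComodMaps

/-- `R^ψ = (ψ⊗id)(R)`. -/
def Rpsi (H : Type*) [Ring H] [Algebra ℂ H] (ψ : H ≃ₐ[ℂ] H) (R : H ⊗[ℂ] H) : H ⊗[ℂ] H :=
  Algebra.TensorProduct.map ψ.toAlgHom (AlgHom.id ℂ H) R

/-- `R^{ψψ} = (ψ⊗ψ)(R)`. -/
def Rpsipsi (H : Type*) [Ring H] [Algebra ℂ H] (ψ : H ≃ₐ[ℂ] H) (R : H ⊗[ℂ] H) : H ⊗[ℂ] H :=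
  Algebra.TensorProduct.map ψ.toAlgHom ψ.toAlgHom R

set_option maxHeartbeats 1600000 in
/-- Let `H` be a ℂ-algebra, `ψ` an algebra automorphism of `H`,
`R ∈ H⊗H`, `B` a ℂ-algebra with an algebra homomorphism `δ : B → B⊗H`, and `K ∈ B⊗H`.
Assume the universal K-matrix axioms (K1) `K δ(b) = δ^ψ(b) K` for all `b ∈ B` and
(K2) `(δ⊗id)(K) = (R^ψ)₃₂ K₁₃ R₂₃`.  Then `K` satisfies the ψ-twisted universal reflection
equation `K₁₂ (R^ψ)₃₂ K₁₃ R₂₃ = (R^{ψψ})₃₂ K₁₃ (R^ψ)₂₃ K₁₂` in `B⊗H⊗H`. -/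
theorem statement2 (B H : Type*) [Ring B] [Algebra ℂ B] [Ring H] [Algebra ℂ H]
    (ψ : H ≃ₐ[ℂ] H) (R : H ⊗[ℂ] H) (δ : B →ₐ[ℂ] B ⊗[ℂ] H) (K : B ⊗[ℂ] H)
    (hK1 : ∀ b : B, K * δ b = dpsi B H ψ δ b * K)
    (hK2 : delta1 B H δ K = i32 B H (Rpsi H ψ R) * K13m B H K * i23 B H R) :
    K12m B H K * i32 B H (Rpsi H ψ R) * K13m B H K * i23 B H R =
      i32 B H (Rpsipsi H ψ R) * K13m B H K * i23 B H (Rpsi H ψ R) * K12m B H K := by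
  set Ψ : (B ⊗[ℂ] (H ⊗[ℂ] H)) →ₐ[ℂ] B ⊗[ℂ] (H ⊗[ℂ] H) :=
    Algebra.TensorProduct.map (AlgHom.id ℂ B)
      (Algebra.TensorProduct.map ψ.toAlgHom (AlgHom.id ℂ H)) with hΨ
  -- aux1: K12m y commutes with 1 ⊗ (1 ⊗ h)
  have aux1 : ∀ (y : B ⊗[ℂ] H) (h : H),
      K12m B H y * ((1 : B) ⊗ₜ[ℂ] ((1 : H) ⊗ₜ[ℂ] h)) =
        ((1 : B) ⊗ₜ[ℂ] ((1 : H) ⊗ₜ[ℂ] h)) * K12m B H y := by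
    intro y h
    induction y using TensorProduct.induction_on with
    | zero => simp
    | tmul b k =>
        simp [K12m, Algebra.TensorProduct.tmul_mul_tmul]
    | add x y hx hy => simp [add_mul, mul_add, hx, hy]
  -- aux2: delta1 δ (b ⊗ h) = K12m (δ b) * (1 ⊗ (1 ⊗ h))
  have aux2 : ∀ (δ' : B →ₐ[ℂ] B ⊗[ℂ] H) (b : B) (h : H),
      delta1 B H δ' (b ⊗ₜ[ℂ] h) = K12m B H (δ' b) * ((1 : B) ⊗ₜ[ℂ] ((1 : H) ⊗ₜ[ℂ] h)) := by
    intro δ' b h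
    have : ∀ z : B ⊗[ℂ] H,
        (Algebra.TensorProduct.assoc ℂ ℂ ℂ B H H) (z ⊗ₜ[ℂ] h) =
          K12m B H z * ((1 : B) ⊗ₜ[ℂ] ((1 : H) ⊗ₜ[ℂ] h)) := by
      intro z
      induction z using TensorProduct.induction_on with
      | zero => simp
      | tmul b' k => simp [K12m, Algebra.TensorProduct.tmul_mul_tmul]
      | add x y hx hy => simp [TensorProduct.add_tmul, add_mul, hx, hy]
    simp [delta1, this]
  -- aux3: K12m K * delta1 δ x = delta1 (dpsi) x * K12m K
  have aux3 : ∀ x : B ⊗[ℂ] H,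
      K12m B H K * delta1 B H δ x = delta1 B H (dpsi B H ψ δ) x * K12m B H K := by
    intro x
    induction x using TensorProduct.induction_on with
    | zero => simp
    | tmul b h =>
        rw [aux2, aux2, ← mul_assoc, ← map_mul, hK1 b, map_mul, mul_assoc, aux1,
          ← mul_assoc, mul_assoc _ _ (K12m B H K)]
    | add x y hx hy => simp [add_mul, mul_add, hx, hy]
  -- aux4: Ψ (delta1 δ x) = delta1 (dpsi) x
  have auxΨ12 : ∀ y : B ⊗[ℂ] H,
      Ψ (K12m B H y) = K12m B H (Algebra.TensorProduct.map (AlgHom.id ℂ B) ψ.toAlgHom y) := by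
    intro y
    induction y using TensorProduct.induction_on with
    | zero => simp
    | tmul b k => simp [K12m, hΨ]
    | add x y hx hy => simp [hx, hy]
  have aux4 : ∀ x : B ⊗[ℂ] H, Ψ (delta1 B H δ x) = delta1 B H (dpsi B H ψ δ) x := by
    intro x
    induction x using TensorProduct.induction_on with
    | zero => simp
    | tmul b h =>
        rw [aux2, map_mul, auxΨ12, aux2]
        simp [dpsi, hΨ]
    | add x y hx hy => simp [hx, hy]
  -- aux on the three factors
  have aux5' : ∀ x : H ⊗[ℂ] H, Ψ (i32 B H x) =
      i32 B H (Algebra.TensorProduct.map (AlgHom.id ℂ H) ψ.toAlgHom x) := by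
    intro x
    induction x using TensorProduct.induction_on with
    | zero => simp
    | tmul a c => simp [i32, hΨ]
    | add x y hx hy => simp [map_add, hx, hy]
  have hcomp : ∀ S : H ⊗[ℂ] H,
      Algebra.TensorProduct.map (AlgHom.id ℂ H) ψ.toAlgHom
          (Algebra.TensorProduct.map ψ.toAlgHom (AlgHom.id ℂ H) S) =
        Algebra.TensorProduct.map ψ.toAlgHom ψ.toAlgHom S := by
    intro S
    induction S using TensorProduct.induction_on with
    | zero => simp
    | tmul a c => simp
    | add x y hx hy => simp only [map_add, hx, hy]
  have aux5 : Ψ (i32 B H (Rpsi H ψ R)) = i32 B H (Rpsipsi H ψ R) := by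
    rw [aux5', Rpsi, hcomp, Rpsipsi]
  have aux6 : ∀ y : B ⊗[ℂ] H, Ψ (K13m B H y) = K13m B H y := by
    intro y
    induction y using TensorProduct.induction_on with
    | zero => simp
    | tmul b k => simp [K13m, hΨ]
    | add x y hx hy => simp only [map_add, hx, hy]
  have aux7 : ∀ S : H ⊗[ℂ] H, Ψ (i23 B H S) =
      i23 B H (Algebra.TensorProduct.map ψ.toAlgHom (AlgHom.id ℂ H) S) := by
    intro S
    induction S using TensorProduct.induction_on with
    | zero => simp
    | tmul a c => simp [i23, hΨ]
    | add x y hx hy => simp only [map_add, hx, hy]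
  calc K12m B H K * i32 B H (Rpsi H ψ R) * K13m B H K * i23 B H R
      = K12m B H K * (i32 B H (Rpsi H ψ R) * K13m B H K * i23 B H R) := by
        simp [mul_assoc]
    _ = K12m B H K * delta1 B H δ K := by rw [← hK2]
    _ = delta1 B H (dpsi B H ψ δ) K * K12m B H K := aux3 K
    _ = Ψ (delta1 B H δ K) * K12m B H K := by rw [aux4]
    _ = Ψ (i32 B H (Rpsi H ψ R) * K13m B H K * i23 B H R) * K12m B H K := by rw [hK2]
    _ = i32 B H (Rpsipsi H ψ R) * K13m B H K * i23 B H (Rpsi H ψ R) * K12m B H K := by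
        rw [map_mul, map_mul, aux5, aux6, aux7, Rpsi]
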